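/- Let T be a binary tree with exactly n+1 leaves, where n ≥ 1, and let a > 1 be a real number. Then there is a finite collection of pairwise disjoint sets of vertices of T, each of which induces a connected subgraph of T, whose union contains every leaf of T, such that each set in the collection contains strictly fewer than a leaves of T and at most one set in the collection contains strictly fewer than a/2 leaves of T. -/

import Mathlib

open SimpleGraph

/-- A binary tree: a finite tree on at least two vertices in which every
vertex has degree 1 or 3. -/
structure BinTree (V : Type) : Type where
  graph : SimpleGraph V
  finiteV : Finite V
  two_le_card : 2 ≤ Nat.card V
  isTree : graph.IsTree
  deg : ∀ v : V, (graph.neighborSet v).ncard = 1 ∨ (graph.neighborSet v).ncard = 3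

/-- A vertex is a leaf when it has degree 1. -/
def BinTree.IsLeaf {V : Type} (T : BinTree V) (v : V) : Prop :=
  (T.graph.neighborSet v).ncard = 1

/-- A binary leaf-labelled tree on the label set `X`. -/
structure LTree (V X : Type) extends BinTree V where
  label : X ≃ {v : V // toBinTree.IsLeaf v}

/-- The graph resulting from an SPR move taking `xy` from `ab` to `cd`:
delete the edges `ax`, `xb`, `cd` and add the edges `ab`, `cx`, `xd`. -/
def sprGraph {V : Type} (G : SimpleGraph V) (x a b c d : V) : SimpleGraph V :=
  SimpleGraph.fromEdgeSet ((G.edgeSet \ {s(a,x), s(x,b), s(c,d)}) ∪ {s(a,b), s(c,x), s(x,d)})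

/-- `B` is obtained from `A` by the SPR move taking `xy` from `ab` to `cd`. -/
def IsSPRMoveAt {V X : Type} (A B : LTree V X) (x y a b c d : V) : Prop :=
  s(x,y) ∈ A.graph.edgeSet ∧ s(a,x) ∈ A.graph.edgeSet ∧ s(x,b) ∈ A.graph.edgeSet ∧
    s(c,d) ∈ A.graph.edgeSet ∧
    ([s(x,y), s(a,x), s(x,b), s(c,d)] : List (Sym2 V)).Nodup ∧
    (∀ p : A.graph.Walk c y, x ∈ p.support) ∧
    B.graph = sprGraph A.graph x a b c d ∧
    ∀ z : X, ((B.label z : V) = (A.label z : V))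

/-- `B` is obtained from `A` by the rSPR move (relative to the root label `r`)
taking `xy` from `ab` to `cd`. -/
def IsRSPRMoveAt {V X : Type} (r : X) (A B : LTree V X) (x y a b c d : V) : Prop :=
  IsSPRMoveAt A B x y a b c d ∧ ∀ p : A.graph.Walk (A.label r : V) y, x ∈ p.support

/-- `B` is obtained from `A` by a single SPR move. -/
def IsSPRMove {V X : Type} (A B : LTree V X) : Prop :=
  ∃ x y a b c d : V, IsSPRMoveAt A B x y a b c d

/-- `B` is obtained from `A` by a single rSPR move. -/
def IsRSPRMove {V X : Type} (r : X) (A B : LTree V X) : Prop :=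
  ∃ x y a b c d : V, IsRSPRMoveAt r A B x y a b c d

/-- Label-preserving isomorphism of binary leaf-labelled trees. -/
def LTreeIso {V W X : Type} (A : LTree V X) (B : LTree W X) : Prop :=
  ∃ e : A.graph ≃g B.graph, ∀ z : X, e (A.label z : V) = (B.label z : W)

/-- The SPR distance between two binary leaf-labelled trees on `X`. -/
noncomputable def dSPR {V W X : Type} (A : LTree V X) (B : LTree W X) : ℕ :=
  sInf {d : ℕ | ∃ f : ℕ → LTree V X, f 0 = A ∧
    (∀ i < d, IsSPRMove (f i) (f (i+1))) ∧ LTreeIso (f d) B}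

/-- The rSPR distance (relative to root label `r`) between two binary
leaf-labelled trees on `X`. -/
noncomputable def dRSPR {V W X : Type} (r : X) (A : LTree V X) (B : LTree W X) : ℕ :=
  sInf {d : ℕ | ∃ f : ℕ → LTree V X, f 0 = A ∧
    (∀ i < d, IsRSPRMove r (f i) (f (i+1))) ∧ LTreeIso (f d) B}


variable {V : Type} {G : SimpleGraph V}

/-- Reachability within a vertex set. -/
def AuxReach (G : SimpleGraph V) (A : Set V) (x y : V) : Prop :=
  ∃ p : G.Walk x y, ∀ z ∈ p.support, z ∈ A

/-- Connectedness of a vertex set via walks staying inside. -/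
def AuxConn (G : SimpleGraph V) (A : Set V) : Prop :=
  A.Nonempty ∧ ∀ x ∈ A, ∀ y ∈ A, AuxReach G A x y

namespace AuxReach

lemma mem_left {A : Set V} {x y : V} (h : AuxReach G A x y) : x ∈ A := by
  obtain ⟨p, hp⟩ := h; exact hp _ p.start_mem_support

lemma mem_right {A : Set V} {x y : V} (h : AuxReach G A x y) : y ∈ A := by
  obtain ⟨p, hp⟩ := h; exact hp _ p.end_mem_support

lemma refl {A : Set V} {x : V} (hx : x ∈ A) : AuxReach G A x x :=
  ⟨SimpleGraph.Walk.nil, by simp [hx]⟩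

lemma symm {A : Set V} {x y : V} (h : AuxReach G A x y) : AuxReach G A y x := by
  obtain ⟨p, hp⟩ := h; exact ⟨p.reverse, by simpa using hp⟩

lemma trans {A : Set V} {x y z : V} (h : AuxReach G A x y) (h' : AuxReach G A y z) :
    AuxReach G A x z := by
  obtain ⟨p, hp⟩ := h; obtain ⟨q, hq⟩ := h'
  refine ⟨p.append q, ?_⟩
  intro u hu
  rcases (SimpleGraph.Walk.mem_support_append_iff _ _).1 hu with h | h
  · exact hp _ h
  · exact hq _ h

lemma mono {A B : Set V} (hAB : A ⊆ B) {x y : V} (h : AuxReach G A x y) :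
    AuxReach G B x y := by
  obtain ⟨p, hp⟩ := h; exact ⟨p, fun z hz => hAB (hp z hz)⟩

lemma of_adj {A : Set V} {x y : V} (h : G.Adj x y) (hx : x ∈ A) (hy : y ∈ A) :
    AuxReach G A x y :=
  ⟨SimpleGraph.Walk.cons h SimpleGraph.Walk.nil, by
    intro z hz; simp only [SimpleGraph.Walk.support_cons, SimpleGraph.Walk.support_nil,
      List.mem_cons, List.mem_singleton, List.not_mem_nil] at hz
    rcases hz with rfl | rfl | h; exacts [hx, hy, absurd h (by simp)]⟩

/-- splitting at a support vertex -/
lemma of_mem_support [DecidableEq V] {A : Set V} {x y : V}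
    {z : V} {p : G.Walk x y} (hp : ∀ u ∈ p.support, u ∈ A) (hz : z ∈ p.support) :
    AuxReach G A x z ∧ AuxReach G A z y := by
  constructor
  · exact ⟨p.takeUntil z hz, fun u hu => hp u (p.support_takeUntil_subset hz hu)⟩
  · exact ⟨p.dropUntil z hz, fun u hu => hp u (p.support_dropUntil_subset hz hu)⟩

end AuxReach

/-- Reach gives induced-subgraph connectivity. -/
lemma AuxConn.induce_connected {A : Set V} (h : AuxConn G A) : (G.induce A).Connected := by
  obtain ⟨⟨x₀, hx₀⟩, hA⟩ := h
  apply SimpleGraph.induce_connected_of_patches x₀ hx₀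
  intro v hv
  obtain ⟨p, hp⟩ := hA x₀ hx₀ v hv
  refine ⟨{z | z ∈ p.support}, fun z hz => hp z hz, p.start_mem_support, p.end_mem_support, ?_⟩
  exact (p.connected_induce_support).preconnected _ _

/-- The reach-component of `w` within `A`. -/
def AuxComp (G : SimpleGraph V) (A : Set V) (w : V) : Set V := {x | AuxReach G A x w}

namespace AuxComp

lemma subset {A : Set V} {w : V} : AuxComp G A w ⊆ A := fun _ hx => hx.mem_left

lemma self_mem {A : Set V} {w : V} (hw : w ∈ A) : w ∈ AuxComp G A w := AuxReach.refl hw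

lemma closed {A : Set V} {w x y : V} (h : AuxReach G A x y) (hy : y ∈ AuxComp G A w) :
    x ∈ AuxComp G A w := h.trans hy

lemma conn [DecidableEq V] {A : Set V} {w : V} (hw : w ∈ A) : AuxConn G (AuxComp G A w) := by
  refine ⟨⟨w, self_mem hw⟩, ?_⟩
  intro x hx y hy
  obtain ⟨p, hp⟩ := (hx : AuxReach G A x w)
  obtain ⟨q, hq⟩ := (hy : AuxReach G A y w).symm
  refine ⟨p.append q, ?_⟩
  intro z hz
  rcases (SimpleGraph.Walk.mem_support_append_iff _ _).1 hz with h | h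
  · exact (AuxReach.of_mem_support hp h).2
  · exact ((AuxReach.of_mem_support hq h).1).symm

end AuxComp

/-- first-hit lemma -/
lemma exists_adj_of_reach [DecidableEq V] {A : Set V} {x v : V}
    (h : AuxReach G A x v) (hne : x ≠ v) :
    ∃ w, G.Adj v w ∧ AuxReach G (A \ {v}) x w := by
  obtain ⟨p, hp⟩ := h
  have hv : v ∈ p.support := p.end_mem_support
  set q := p.takeUntil v hv with hq
  have hcount : q.support.count v = 1 := p.count_support_takeUntil_eq_one hv
  have hqsup : ∀ z ∈ q.support, z ∈ A := fun z hz => hp z (p.support_takeUntil_subset hv hz)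
  obtain ⟨w, h', r', hr⟩ := SimpleGraph.Walk.exists_eq_cons_of_ne (Ne.symm hne) q.reverse
  have hsup : q.reverse.support = v :: r'.support := by rw [hr, SimpleGraph.Walk.support_cons]
  have hvr : v ∉ r'.support := by
    intro hmem
    have : 2 ≤ q.reverse.support.count v := by
      rw [hsup, List.count_cons_self]
      have := List.count_pos_iff.2 hmem
      omega
    rw [SimpleGraph.Walk.support_reverse, List.count_reverse, hcount] at this
    omega
  refine ⟨w, h', ⟨r'.reverse, ?_⟩⟩
  intro z hz
  rw [SimpleGraph.Walk.support_reverse, List.mem_reverse] at hz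
  refine ⟨?_, ?_⟩
  · apply hqsup
    have : z ∈ q.reverse.support := by rw [hsup]; exact List.mem_cons_of_mem _ hz
    rwa [SimpleGraph.Walk.support_reverse, List.mem_reverse] at this
  · simp only [Set.mem_singleton_iff]
    rintro rfl; exact hvr hz

/-- complement of a component stays connected to `v`. -/
lemma reach_compl_comp [DecidableEq V] {A : Set V} {v w x : V}
    (hv : v ∈ A) (hx : x ∈ A) (hxC : x ∉ AuxComp G (A \ {v}) w)
    (hreach : AuxReach G A x v) :
    AuxReach G (A \ AuxComp G (A \ {v}) w) x v := by
  set C := AuxComp G (A \ {v}) w with hC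
  have hvC : v ∉ C := fun h => (AuxComp.subset h).2 rfl
  rcases eq_or_ne x v with rfl | hne
  · exact AuxReach.refl ⟨hv, hvC⟩
  obtain ⟨w'', hadj, ⟨q, hq⟩⟩ := exists_adj_of_reach hreach hne
  have hqC : ∀ z ∈ q.support, z ∈ A \ C := by
    intro z hz
    refine ⟨(hq z hz).1, fun hzC => hxC ?_⟩
    exact AuxComp.closed ⟨q.takeUntil z hz, fun u hu =>
      hq u (q.support_takeUntil_subset hz hu)⟩ hzC
  have h1 : AuxReach G (A \ C) x w'' := ⟨q, hqC⟩
  exact h1.trans (AuxReach.of_adj hadj.symm (hqC _ q.end_mem_support) ⟨hv, hvC⟩)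

/-- crossing edge -/
lemma exists_crossing {S P : Set V} {x y : V} (p : G.Walk x y)
    (hp : ∀ z ∈ p.support, z ∈ S) (hx : x ∈ P) (hy : y ∉ P) :
    ∃ v u, v ∈ P ∧ u ∈ S ∧ u ∉ P ∧ G.Adj v u := by
  induction p with
  | nil => exact absurd hx hy
  | @cons a b c hadj q ih =>
    by_cases hb : b ∈ P
    · exact ih (fun z hz => hp z (by simp [SimpleGraph.Walk.support_cons, hz])) hb hy
    · exact ⟨a, b, hx, hp b (by simp [SimpleGraph.Walk.support_cons]), hb, hadj⟩

/-- acyclicity: two distinct neighbors of `v` cannot be joined avoiding `v`. -/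
lemma no_detour [DecidableEq V] (hG : G.IsAcyclic) {v w₁ w₂ : V} (h1 : G.Adj v w₁) (h2 : G.Adj v w₂)
    (hne : w₁ ≠ w₂) (p : G.Walk w₁ w₂) (hv : v ∉ p.support) : False := by
  have hq := p.bypass_isPath
  have hvq : v ∉ p.bypass.support := fun h => hv (p.support_bypass_subset h)
  have hpath : (SimpleGraph.Walk.cons h1 p.bypass).IsPath := hq.cons hvq
  have hcyc : (SimpleGraph.Walk.cons h2.symm (SimpleGraph.Walk.cons h1 p.bypass)).IsCycle := by
    rw [SimpleGraph.Walk.cons_isCycle_iff]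
    refine ⟨hpath, ?_⟩
    simp only [SimpleGraph.Walk.edges_cons, List.mem_cons]
    rintro (h | h)
    · rw [Sym2.eq_iff] at h
      rcases h with ⟨hw2v, _⟩ | ⟨hw2w1, _⟩
      · exact G.irrefl (hw2v ▸ h2)
      · exact hne hw2w1.symm
    · exact hvq (SimpleGraph.Walk.snd_mem_support_of_mem_edges _ h)
  exact hG _ hcyc

/-- number of leaves of `T` in a set -/
noncomputable def leafCnt {V : Type} (T : BinTree V) (s : Set V) : ℕ := {v ∈ s | T.IsLeaf v}.ncard

section cnt
variable {V : Type} (T : BinTree V)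

lemma leafCnt_mono {s t : Set V} (h : s ⊆ t) : leafCnt T s ≤ leafCnt T t := by
  haveI := T.finiteV
  exact Set.ncard_le_ncard (fun v hv => ⟨h hv.1, hv.2⟩) (Set.toFinite _)

lemma leafCnt_union_le (s t : Set V) :
    leafCnt T (s ∪ t) ≤ leafCnt T s + leafCnt T t := by
  haveI := T.finiteV
  have h : {v ∈ s ∪ t | T.IsLeaf v} = {v ∈ s | T.IsLeaf v} ∪ {v ∈ t | T.IsLeaf v} := by
    ext v; simp only [Set.mem_setOf_eq, Set.mem_union]; tauto
  rw [leafCnt, h]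
  exact Set.ncard_union_le _ _

lemma leafCnt_diff_add {s t : Set V} (h : t ⊆ s) :
    leafCnt T t + leafCnt T (s \ t) = leafCnt T s := by
  haveI := T.finiteV
  have hu : {v ∈ t | T.IsLeaf v} ∪ {v ∈ s \ t | T.IsLeaf v} = {v ∈ s | T.IsLeaf v} := by
    ext v
    simp only [Set.mem_union, Set.mem_setOf_eq, Set.mem_diff]
    constructor
    · rintro (⟨hv, hl⟩ | ⟨⟨hv, _⟩, hl⟩)
      exacts [⟨h hv, hl⟩, ⟨hv, hl⟩]
    · rintro ⟨hv, hl⟩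
      by_cases hvt : v ∈ t
      exacts [Or.inl ⟨hvt, hl⟩, Or.inr ⟨⟨hv, hvt⟩, hl⟩]
  have hd : Disjoint {v ∈ t | T.IsLeaf v} {v ∈ s \ t | T.IsLeaf v} := by
    rw [Set.disjoint_left]
    rintro v ⟨hv, _⟩ ⟨⟨_, hvn⟩, _⟩
    exact hvn hv
  rw [leafCnt, leafCnt, leafCnt, ← hu,
    Set.ncard_union_eq hd (Set.toFinite _) (Set.toFinite _)]

lemma leafCnt_singleton_le (v : V) : leafCnt T {v} ≤ 1 := by
  haveI := T.finiteV
  calc leafCnt T {v} ≤ ({v} : Set V).ncard :=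
        Set.ncard_le_ncard (fun x hx => hx.1) (Set.toFinite _)
    _ = 1 := Set.ncard_singleton v

lemma leafCnt_singleton_of_not_leaf {v : V} (h : ¬ T.IsLeaf v) : leafCnt T {v} = 0 := by
  have : {x ∈ ({v} : Set V) | T.IsLeaf x} = ∅ := by
    ext x
    simp only [Set.mem_setOf_eq, Set.mem_singleton_iff, Set.mem_empty_iff_false, iff_false,
      not_and]
    rintro rfl; exact h
  rw [leafCnt, this, Set.ncard_empty]

end cnt

lemma auxConn_of_reach_base {A : Set V} {v : V} (hv : v ∈ A)
    (h : ∀ x ∈ A, AuxReach G A x v) : AuxConn G A :=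
  ⟨⟨v, hv⟩, fun x hx y hy => (h x hx).trans (h y hy).symm⟩

/-- The key splitting lemma. -/
lemma exists_split {V : Type} (T : BinTree V) {a : ℝ} (ha : 2 < a) {S : Set V}
    (hS : AuxConn T.graph S) (hcnt : a ≤ (leafCnt T S : ℝ)) :
    ∃ P : Set V, P ⊆ S ∧ P.Nonempty ∧ (S \ P).Nonempty ∧ AuxConn T.graph P ∧
      AuxConn T.graph (S \ P) ∧ a / 2 ≤ (leafCnt T P : ℝ) ∧ (leafCnt T P : ℝ) < a := by
  classical
  haveI := T.finiteV
  have ha0 : (0 : ℝ) < a := lt_trans two_pos ha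
  set F : Set (Set V) := {P | P ⊆ S ∧ P.Nonempty ∧ (S \ P).Nonempty ∧ AuxConn T.graph P ∧
      AuxConn T.graph (S \ P) ∧ a / 2 ≤ (leafCnt T P : ℝ)} with hF
  -- F is nonempty
  have hFne : F.Nonempty := by
    -- find an edge inside S
    have h2 : 1 < leafCnt T S := by
      have h2' : (2 : ℝ) < (leafCnt T S : ℝ) := lt_of_lt_of_le ha hcnt
      have : (1 : ℝ) < (leafCnt T S : ℝ) := lt_trans one_lt_two h2'
      exact_mod_cast this
    obtain ⟨x, y, hx, hy, hne⟩ := (Set.one_lt_ncard_iff (Set.toFinite _)).mp h2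
    have hxS : x ∈ S := hx.1
    have hyS : y ∈ S := hy.1
    obtain ⟨p, hp⟩ := hS.2 x hxS y hyS
    obtain ⟨w, hadj, q, rfl⟩ := SimpleGraph.Walk.exists_eq_cons_of_ne hne p
    have hwS : w ∈ S := hp w (by
      rw [SimpleGraph.Walk.support_cons]
      exact List.mem_cons_of_mem _ q.start_mem_support)
    have hwx : w ≠ x := fun h => T.graph.irrefl (h ▸ hadj)
    set C : Set V := AuxComp T.graph (S \ {x}) w with hC
    have hCsub : C ⊆ S \ {x} := AuxComp.subset
    have hCS : C ⊆ S := fun z hz => (hCsub hz).1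
    have hxC : x ∉ C := fun h => (hCsub h).2 rfl
    have hwC : w ∈ C := AuxComp.self_mem ⟨hwS, hwx⟩
    have hconnC : AuxConn T.graph C := AuxComp.conn ⟨hwS, hwx⟩
    have hconnSC : AuxConn T.graph (S \ C) := by
      refine auxConn_of_reach_base ⟨hxS, hxC⟩ ?_
      intro z hz
      exact reach_compl_comp hxS hz.1 hz.2 (hS.2 z hz.1 x hxS)
    have hcount : leafCnt T C + leafCnt T (S \ C) = leafCnt T S := leafCnt_diff_add T hCS
    by_cases hhalf : a / 2 ≤ (leafCnt T C : ℝ)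
    · exact ⟨C, hCS, ⟨w, hwC⟩, ⟨x, hxS, hxC⟩, hconnC, hconnSC, hhalf⟩
    · refine ⟨S \ C, Set.diff_subset, ⟨x, hxS, hxC⟩, ?_, hconnSC, ?_, ?_⟩
      · rw [Set.diff_diff_cancel_left hCS]
        exact ⟨w, hwC⟩
      · rw [Set.diff_diff_cancel_left hCS]
        exact hconnC
      · push_neg at hhalf
        have : (leafCnt T C : ℝ) + (leafCnt T (S \ C) : ℝ) = (leafCnt T S : ℝ) := by
          exact_mod_cast congrArg (Nat.cast : ℕ → ℝ) hcount
        linarith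
  -- take a minimal element of F
  have hns : (Set.ncard '' F).Nonempty := hFne.image _
  obtain ⟨P, hPF, hPcard⟩ := Nat.sInf_mem hns
  have hmin : ∀ Q ∈ F, P.ncard ≤ Q.ncard := by
    intro Q hQ
    rw [hPcard]
    exact Nat.sInf_le ⟨Q, hQ, rfl⟩
  obtain ⟨hPS, hPne, hSPne, hPconn, hSPconn, hPhalf⟩ := hPF
  refine ⟨P, hPS, hPne, hSPne, hPconn, hSPconn, hPhalf, ?_⟩
  by_contra hge
  push_neg at hge
  -- find a crossing edge (v ∈ P, u ∈ S \ P)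
  obtain ⟨p₀, hp₀⟩ := hPne
  obtain ⟨q₀, hq₀⟩ := hSPne
  obtain ⟨wk, hwk⟩ := hS.2 p₀ (hPS hp₀) q₀ hq₀.1
  obtain ⟨v, u, hvP, huS, huP, hadj⟩ := exists_crossing wk hwk hp₀ hq₀.2
  have hu_nb : u ∈ T.graph.neighborSet v := hadj
  -- a component of `P \ {v}` at `w₀` always has fewer than `a/2` leaves
  have key : ∀ w₀ : V, (leafCnt T (AuxComp T.graph (P \ {v}) w₀) : ℝ) < a / 2 := by
    intro w₀
    by_contra hkey
    push_neg at hkey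
    set C := AuxComp T.graph (P \ {v}) w₀ with hC
    have hCsub : C ⊆ P \ {v} := AuxComp.subset
    have hCP : C ⊆ P := fun z hz => (hCsub hz).1
    have hvC : v ∉ C := fun h => (hCsub h).2 rfl
    have hCne : C.Nonempty := by
      rw [Set.nonempty_iff_ne_empty]
      intro h
      rw [hC] at h
      have : leafCnt T (AuxComp T.graph (P \ {v}) w₀) = 0 := by
        rw [h]; simp [leafCnt]
      rw [this] at hkey
      norm_num at hkey
      linarith
    have hw₀ : w₀ ∈ P \ {v} := by
      obtain ⟨z, hz⟩ := hCne
      exact (hz : AuxReach T.graph (P \ {v}) z w₀).mem_right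
    have hconnC : AuxConn T.graph C := AuxComp.conn hw₀
    have huC : u ∉ C := fun h => huP (hCP h)
    have hconnSC : AuxConn T.graph (S \ C) := by
      refine auxConn_of_reach_base ⟨huS, huC⟩ ?_
      intro z hz
      by_cases hzP : z ∈ P
      · have h1 : AuxReach T.graph (P \ C) z v :=
          reach_compl_comp hvP hzP hz.2 (hPconn.2 z hzP v hvP)
        have hsub : P \ C ⊆ S \ C := fun y hy => ⟨hPS hy.1, hy.2⟩
        have h2 : AuxReach T.graph (S \ C) z v := h1.mono hsub
        exact h2.trans (AuxReach.of_adj hadj ⟨hPS hvP, hvC⟩ ⟨huS, huC⟩)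
      · have hsub : S \ P ⊆ S \ C := fun y hy => ⟨hy.1, fun hyC => hy.2 (hCP hyC)⟩
        exact (hSPconn.2 z ⟨hz.1, hzP⟩ u ⟨huS, huP⟩).mono hsub
    have hCF : C ∈ F := ⟨fun z hz => hPS (hCP hz), hCne, ⟨u, huS, huC⟩, hconnC, hconnSC, hkey⟩
    have hlt : C.ncard < P.ncard :=
      Set.ncard_lt_ncard ((Set.ssubset_iff_of_subset hCP).mpr ⟨v, hvP, hvC⟩) (Set.toFinite _)
    exact absurd (hmin C hCF) (not_le.mpr hlt)
  -- degree analysis at v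
  rcases T.deg v with hdeg | hdeg
  · -- degree 1 : P = {v}, too few leaves
    obtain ⟨z, hz⟩ := Set.ncard_eq_one.mp hdeg
    have huz : u = z := by rw [← Set.mem_singleton_iff, ← hz]; exact hu_nb
    have hPv : P = {v} := by
      ext x
      simp only [Set.mem_singleton_iff]
      constructor
      · intro hxP
        by_contra hxv
        obtain ⟨w', hw', hr⟩ := exists_adj_of_reach (hPconn.2 x hxP v hvP) hxv
        have : w' = z := by rw [← Set.mem_singleton_iff, ← hz]; exact hw'
        rw [this, ← huz] at hr
        exact huP (hr.mem_right.1)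
      · rintro rfl; exact hvP
    have h1 : (leafCnt T P : ℝ) ≤ 1 := by
      rw [hPv]
      exact_mod_cast leafCnt_singleton_le T v
    linarith
  · -- degree 3
    have hnl : ¬ T.IsLeaf v := by rw [BinTree.IsLeaf, hdeg]; omega
    have h2 : (T.graph.neighborSet v \ {u}).ncard = 2 := by
      rw [Set.ncard_diff_singleton_of_mem hu_nb, hdeg]
    obtain ⟨b, c, hbc, hset⟩ := Set.ncard_eq_two.mp h2
    -- coverage
    have hcov : P ⊆ {v} ∪ (AuxComp T.graph (P \ {v}) b ∪ AuxComp T.graph (P \ {v}) c) := by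
      intro x hxP
      by_cases hxv : x = v
      · exact Or.inl (by simp [hxv])
      obtain ⟨w', hw', hr⟩ := exists_adj_of_reach (hPconn.2 x hxP v hvP) hxv
      have hwu : w' ≠ u := by
        rintro rfl
        exact huP (hr.mem_right.1)
      have : w' ∈ ({b, c} : Set V) := by rw [← hset]; exact ⟨hw', hwu⟩
      rcases this with rfl | rfl
      · exact Or.inr (Or.inl hr)
      · exact Or.inr (Or.inr hr)
    have hle : leafCnt T P ≤ leafCnt T {v} + (leafCnt T (AuxComp T.graph (P \ {v}) b) +
        leafCnt T (AuxComp T.graph (P \ {v}) c)) := by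
      calc leafCnt T P ≤ leafCnt T ({v} ∪ (AuxComp T.graph (P \ {v}) b ∪
          AuxComp T.graph (P \ {v}) c)) := leafCnt_mono T hcov
        _ ≤ leafCnt T {v} + leafCnt T (AuxComp T.graph (P \ {v}) b ∪
            AuxComp T.graph (P \ {v}) c) := leafCnt_union_le T _ _
        _ ≤ leafCnt T {v} + (leafCnt T (AuxComp T.graph (P \ {v}) b) +
            leafCnt T (AuxComp T.graph (P \ {v}) c)) := by
          gcongr
          exact leafCnt_union_le T _ _
    rw [leafCnt_singleton_of_not_leaf T hnl, zero_add] at hle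
    have hb := key b
    have hc := key c
    have : (leafCnt T P : ℝ) ≤ (leafCnt T (AuxComp T.graph (P \ {v}) b) : ℝ) +
        (leafCnt T (AuxComp T.graph (P \ {v}) c) : ℝ) := by exact_mod_cast hle
    linarith

/-- recursive division lemma -/
lemma exists_division {V : Type} (T : BinTree V) {a : ℝ} (ha : 2 < a) :
    ∀ (n : ℕ) (S : Set V), S.ncard ≤ n → AuxConn T.graph S →
    ∃ 𝒞 : Finset (Set V), (∀ s ∈ 𝒞, s ⊆ S) ∧
      (∀ s ∈ 𝒞, ∀ t ∈ 𝒞, s ≠ t → Disjoint s t) ∧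
      (∀ s ∈ 𝒞, AuxConn T.graph s) ∧ (∀ x ∈ S, ∃ s ∈ 𝒞, x ∈ s) ∧
      (∀ s ∈ 𝒞, (leafCnt T s : ℝ) < a) ∧
      (∀ s ∈ 𝒞, ∀ t ∈ 𝒞, (leafCnt T s : ℝ) < a / 2 → (leafCnt T t : ℝ) < a / 2 → s = t) := by
  classical
  haveI := T.finiteV
  intro n
  induction n with
  | zero =>
    intro S hcard hconn
    obtain ⟨x, hx⟩ := hconn.1
    have : 0 < S.ncard := (Set.ncard_pos (Set.toFinite _)).mpr ⟨x, hx⟩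
    omega
  | succ n ih =>
    intro S hcard hconn
    by_cases hlt : (leafCnt T S : ℝ) < a
    · refine ⟨{S}, ?_, ?_, ?_, ?_, ?_, ?_⟩ <;>
        simp only [Finset.mem_singleton]
      · rintro s rfl; rfl
      · rintro s rfl t rfl h; exact absurd rfl h
      · rintro s rfl; exact hconn
      · intro x hx; exact ⟨S, rfl, hx⟩
      · rintro s rfl; exact hlt
      · rintro s rfl t rfl _ _; rfl
    · push_neg at hlt
      obtain ⟨P, hPS, hPne, hSPne, hPconn, hSPconn, hPhalf, hPa⟩ :=
        exists_split T ha hconn hlt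
      have hcard' : (S \ P).ncard ≤ n := by
        have h1 : (S \ P).ncard = S.ncard - P.ncard := Set.ncard_diff hPS (Set.toFinite _)
        have h2 : 0 < P.ncard := (Set.ncard_pos (Set.toFinite _)).mpr hPne
        omega
      obtain ⟨𝒞', hsub', hdisj', hconn', hcov', hlt', huniq'⟩ := ih (S \ P) hcard' hSPconn
      refine ⟨insert P 𝒞', ?_, ?_, ?_, ?_, ?_, ?_⟩
      · intro s hs
        rcases Finset.mem_insert.mp hs with rfl | hs
        · exact hPS
        · exact (hsub' s hs).trans Set.diff_subset
      · intro s hs t ht hne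
        have hdP : ∀ t' ∈ 𝒞', Disjoint P t' := by
          intro t' ht'
          rw [Set.disjoint_left]
          intro x hxP hxt
          exact (hsub' t' ht' hxt).2 hxP
        rcases Finset.mem_insert.mp hs with h1 | h1
        · rcases Finset.mem_insert.mp ht with h2 | h2
          · exact absurd (h1.trans h2.symm) hne
          · exact h1 ▸ hdP t h2
        · rcases Finset.mem_insert.mp ht with h2 | h2
          · exact h2 ▸ (hdP s h1).symm
          · exact hdisj' s h1 t h2 hne
      · intro s hs
        rcases Finset.mem_insert.mp hs with rfl | hs
        · exact hPconn
        · exact hconn' s hs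
      · intro x hx
        by_cases hxP : x ∈ P
        · exact ⟨P, Finset.mem_insert_self _ _, hxP⟩
        · obtain ⟨s, hs, hxs⟩ := hcov' x ⟨hx, hxP⟩
          exact ⟨s, Finset.mem_insert_of_mem hs, hxs⟩
      · intro s hs
        rcases Finset.mem_insert.mp hs with rfl | hs
        · exact hPa
        · exact hlt' s hs
      · intro s hs t ht hsa hta
        have hsP : s ∈ 𝒞' := by
          rcases Finset.mem_insert.mp hs with rfl | hs
          · linarith
          · exact hs
        have htP : t ∈ 𝒞' := by
          rcases Finset.mem_insert.mp ht with rfl | ht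
          · linarith
          · exact ht
        exact huniq' s hsP t htP hsa hta

/-- if `T` is a binary tree with exactly `n+1` leaves (`n ≥ 1`) and
`a > 1` is real, then there is a finite collection of pairwise disjoint vertex
sets, each inducing a connected subgraph of `T`, covering all leaves, with each
set containing fewer than `a` leaves and at most one set containing fewer than
`a/2` leaves. -/
theorem exists_tree_division {n : ℕ} (hn : 1 ≤ n) {V : Type} (T : BinTree V)
    (hleaves : {v : V | T.IsLeaf v}.ncard = n + 1)
    (a : ℝ) (ha : 1 < a) :
    ∃ 𝒞 : Finset (Set V),
      (∀ s ∈ 𝒞, ∀ t ∈ 𝒞, s ≠ t → Disjoint s t) ∧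
      (∀ s ∈ 𝒞, (T.graph.induce s).Connected) ∧
      (∀ v : V, T.IsLeaf v → ∃ s ∈ 𝒞, v ∈ s) ∧
      (∀ s ∈ 𝒞, ({v ∈ s | T.IsLeaf v}.ncard : ℝ) < a) ∧
      (∀ s ∈ 𝒞, ∀ t ∈ 𝒞, ({v ∈ s | T.IsLeaf v}.ncard : ℝ) < a / 2 →
        ({v ∈ t | T.IsLeaf v}.ncard : ℝ) < a / 2 → s = t) := by
  classical
  haveI := T.finiteV
  rcases le_or_gt a 2 with ha2 | ha2
  · -- small a : singletons of leaves
    refine ⟨({v : V | T.IsLeaf v}.toFinite.toFinset).image (fun v => ({v} : Set V)),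
      ?_, ?_, ?_, ?_, ?_⟩
    · intro s hs t ht hne
      obtain ⟨v, hv, rfl⟩ := Finset.mem_image.mp hs
      obtain ⟨w, hw, rfl⟩ := Finset.mem_image.mp ht
      rw [Set.disjoint_singleton_left, Set.mem_singleton_iff]
      exact fun h => hne (h ▸ rfl)
    · intro s hs
      obtain ⟨v, hv, rfl⟩ := Finset.mem_image.mp hs
      have : AuxConn T.graph {v} := ⟨⟨v, rfl⟩, by
        rintro x rfl y rfl
        exact AuxReach.refl rfl⟩
      exact this.induce_connected
    · intro v hv
      exact ⟨{v}, Finset.mem_image.mpr ⟨v, by simpa using hv, rfl⟩, rfl⟩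
    · intro s hs
      obtain ⟨v, hv, rfl⟩ := Finset.mem_image.mp hs
      have h1 : (leafCnt T {v} : ℝ) ≤ 1 := by exact_mod_cast leafCnt_singleton_le T v
      calc ({x ∈ ({v} : Set V) | T.IsLeaf x}.ncard : ℝ) = (leafCnt T {v} : ℝ) := rfl
        _ ≤ 1 := h1
        _ < a := ha
    · intro s hs t ht hsa hta
      obtain ⟨v, hv, rfl⟩ := Finset.mem_image.mp hs
      have hvl : T.IsLeaf v := by simpa using hv
      have : {x ∈ ({v} : Set V) | T.IsLeaf x} = {v} := by
        ext x
        simp only [Set.mem_setOf_eq, Set.mem_singleton_iff]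
        exact ⟨fun h => h.1, fun h => ⟨h, h ▸ hvl⟩⟩
      rw [this, Set.ncard_singleton] at hsa
      norm_num at hsa
      linarith
  · -- large a : use the division lemma on the whole vertex set
    haveI : Nonempty V := (Nat.card_pos_iff.mp (lt_of_lt_of_le two_pos T.two_le_card)).1
    have hconn : AuxConn T.graph (Set.univ : Set V) := by
      refine ⟨⟨Classical.arbitrary V, trivial⟩ , ?_⟩
      intro x _ y _
      obtain ⟨p⟩ := T.isTree.isConnected x y
      exact ⟨p, fun z _ => trivial⟩
    obtain ⟨𝒞, _, hdisj, hconn', hcov, hlt, huniq⟩ :=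
      exists_division T ha2 (Set.univ : Set V).ncard Set.univ le_rfl hconn
    refine ⟨𝒞, hdisj, fun s hs => (hconn' s hs).induce_connected,
      fun v _ => hcov v trivial, hlt, huniq⟩
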